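/- Let k be a field, let R = k[[x]] be the power series ring in one variable over k with maximal ideal m_R = (x), and for n ∈ ℕ let I_n = (x^{⌈nπ⌉}) (so I_0 = R). Then 𝓘 = {I_n} is a filtration on R, and its analytic spread is ℓ(𝓘) = 0 < 1 = dim R. In particular, for every n > 0 and every f ∈ I_n there exists r ∈ ℤ_{>0} such that f^r ∈ m_R I_{rn}. -/

import Mathlib

/-!
STATEMENT 17: For a filtration 𝓘 = {I_n} on a Noetherian local ring (R, m_R), the analytic
spread ℓ(𝓘) = dim R[𝓘]/m_R R[𝓘] satisfies ℓ(𝓘) ≤ dim R.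
-/

open Polynomial

/-- A filtration `I_0 = R ⊇ I_1 ⊇ I_2 ⊇ ⋯` of ideals of `R` with `I_m * I_n ⊆ I_{m+n}`. -/
structure IdealFiltration (R : Type*) [CommRing R] where
  I : ℕ → Ideal R
  I_zero : I 0 = ⊤
  I_antitone : ∀ n, I (n + 1) ≤ I n
  I_mul : ∀ m n, I m * I n ≤ I (m + n)

namespace IdealFiltration

variable {R : Type*} [CommRing R] (F : IdealFiltration R)

/-- The Rees algebra `R[𝓘] = ⊕ₙ Iₙ tⁿ` of a filtration `𝓘 = {Iₙ}`, realized as the subalgebra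
of the polynomial ring `R[t]` consisting of those polynomials whose `n`-th coefficient lies
in `Iₙ`. -/
def reesAlgebra : Subalgebra R R[X] where
  carrier := { f | ∀ n, f.coeff n ∈ F.I n }
  mul_mem' {f g} hf hg n := by
    rw [coeff_mul]
    apply Ideal.sum_mem
    rintro ⟨j, k⟩ e
    have : f.coeff j * g.coeff k ∈ F.I (j + k) :=
      F.I_mul j k (Ideal.mul_mem_mul (hf j) (hg k))
    rwa [show j + k = n by simpa using e] at this
  one_mem' n := by
    rw [coeff_one]
    split_ifs with h
    · rw [h, F.I_zero]; trivial
    · simp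
  add_mem' {f g} hf hg n := by
    rw [coeff_add]
    exact Ideal.add_mem _ (hf n) (hg n)
  zero_mem' n := by simp
  algebraMap_mem' r n := by
    rw [Polynomial.algebraMap_apply, coeff_C]
    split_ifs with h
    · rw [h, F.I_zero]; trivial
    · simp

/-- The analytic spread `ℓ(𝓘) = dim R[𝓘]/m_R R[𝓘]` of a filtration `𝓘` on a local ring. -/
noncomputable def analyticSpread [IsLocalRing R] : WithBot (WithTop ℕ) :=
  ringKrullDim
    (F.reesAlgebra ⧸ (IsLocalRing.maximalIdeal R).map (algebraMap R F.reesAlgebra))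

end IdealFiltration



namespace PiAux

open Polynomial

noncomputable def c (n : ℕ) : ℕ := ⌈(n : ℝ) * Real.pi⌉₊

lemma c_zero : c 0 = 0 := by simp [c]

lemma c_mono : Monotone c := fun m n h =>
  Nat.ceil_mono (mul_le_mul_of_nonneg_right (by exact_mod_cast h) Real.pi_pos.le)

lemma c_add_le (m n : ℕ) : c (m + n) ≤ c m + c n := by
  have : ((m + n : ℕ) : ℝ) * Real.pi = (m : ℝ) * Real.pi + (n : ℝ) * Real.pi := by
    push_cast; ring
  rw [c, this]
  exact Nat.ceil_add_le _ _

lemma lt_c {n : ℕ} (hn : 0 < n) : (n : ℝ) * Real.pi < c n := by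
  refine lt_of_le_of_ne (Nat.le_ceil _) ?_
  exact (irrational_pi.natCast_mul hn.ne').ne_nat _

lemma exists_r {n : ℕ} (hn : 0 < n) : ∃ r : ℕ, 0 < r ∧ c (r * n) + 1 ≤ r * c n := by
  set a : ℝ := (n : ℝ) * Real.pi with ha_def
  have ha0 : 0 ≤ a := by positivity
  have ha : a < c n := lt_c hn
  have hε : (0 : ℝ) < (c n : ℝ) - a := sub_pos.2 ha
  obtain ⟨r, hr⟩ := exists_nat_gt (1 / ((c n : ℝ) - a))
  have hr0 : 0 < r := by
    rcases Nat.eq_zero_or_pos r with h | h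
    · subst h
      exfalso
      have : (0:ℝ) < 1 / ((c n : ℝ) - a) := by positivity
      simp only [Nat.cast_zero] at hr
      linarith
    · exact h
  refine ⟨r, hr0, ?_⟩
  have h1 : 1 < (r : ℝ) * ((c n : ℝ) - a) := (div_lt_iff₀ hε).mp hr
  have hcast : ((r * n : ℕ) : ℝ) * Real.pi = (r : ℝ) * a := by
    rw [ha_def]; push_cast; ring
  have hlt : ((c (r * n) : ℕ) : ℝ) < ((r * c n : ℕ) : ℝ) := by
    calc ((c (r * n) : ℕ) : ℝ) < ((r * n : ℕ) : ℝ) * Real.pi + 1 := by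
          exact Nat.ceil_lt_add_one (by positivity)
      _ = (r : ℝ) * a + 1 := by rw [hcast]
      _ < (r : ℝ) * a + (r : ℝ) * ((c n : ℝ) - a) := by linarith
      _ = (r : ℝ) * (c n : ℝ) := by ring
      _ = ((r * c n : ℕ) : ℝ) := by push_cast; ring
  exact_mod_cast Nat.cast_lt.mp hlt

end PiAux


section PiMain

open Polynomial PowerSeries PiAux

variable (k : Type*) [Field k]

/-- The filtration `I_n = (X^{⌈nπ⌉})` on `k⟦X⟧`. -/
noncomputable def piFiltration : IdealFiltration (PowerSeries k) where
  I n := Ideal.span {(PowerSeries.X : PowerSeries k) ^ c n}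
  I_zero := by
    show Ideal.span {(PowerSeries.X : PowerSeries k) ^ c 0} = ⊤
    rw [c_zero, pow_zero, Ideal.span_singleton_one]
  I_antitone n := Ideal.span_singleton_le_span_singleton.mpr
    (pow_dvd_pow _ (c_mono (Nat.le_succ n)))
  I_mul m n := by
    rw [Ideal.span_singleton_mul_span_singleton, ← pow_add]
    exact Ideal.span_singleton_le_span_singleton.mpr (pow_dvd_pow _ (c_add_le m n))

lemma piKey {n : ℕ} (hn : 0 < n) {f : PowerSeries k} (hf : f ∈ (piFiltration k).I n) :
    ∃ r > 0, f ^ r ∈ IsLocalRing.maximalIdeal (PowerSeries k) * (piFiltration k).I (r * n) := by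
  obtain ⟨r, hr0, hr⟩ := exists_r hn
  refine ⟨r, hr0, ?_⟩
  rw [PowerSeries.maximalIdeal_eq_span_X, piFiltration,
    Ideal.span_singleton_mul_span_singleton, ← pow_succ']
  simp only [piFiltration] at hf
  rw [Ideal.mem_span_singleton] at hf ⊢
  obtain ⟨g, rfl⟩ := hf
  rw [mul_pow, ← pow_mul]
  exact Dvd.dvd.mul_right (pow_dvd_pow _ (by rw [mul_comm (c n) r]; exact hr)) _

end PiMain


lemma psDimOne (k : Type*) [Field k] : ringKrullDim (PowerSeries k) = 1 := by
  rw [ringKrullDim]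
  apply le_antisymm
  · refine iSup_le fun p => ?_
    have hlen : p.length ≤ 1 := by
      by_contra h
      push_neg at h
      have h2 : 2 ≤ p.length := h
      set q0 := p.toFun ⟨0, by omega⟩ with hq0
      set q1 := p.toFun ⟨1, by omega⟩ with hq1
      set q2 := p.toFun ⟨2, by omega⟩ with hq2
      have h01 : q0 < q1 := p.strictMono (by simp [Fin.lt_def])
      have h12 : q1 < q2 := p.strictMono (by simp [Fin.lt_def])
      rw [← PrimeSpectrum.asIdeal_lt_asIdeal] at h01 h12
      have hne : q1.asIdeal ≠ ⊥ := by
        intro hb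
        rw [hb] at h01
        exact not_lt_bot h01
      have hmax : q1.asIdeal.IsMaximal := IsPrime.to_maximal_ideal hne
      exact h12.ne (hmax.eq_of_le q2.isPrime.ne_top h12.le)
    exact_mod_cast hlen
  · have hlt : (⟨⊥, Ideal.bot_prime⟩ : PrimeSpectrum (PowerSeries k))
        < ⟨IsLocalRing.maximalIdeal (PowerSeries k),
            (IsLocalRing.maximalIdeal.isMaximal _).isPrime⟩ := by
      rw [← PrimeSpectrum.asIdeal_lt_asIdeal]
      exact bot_lt_iff_ne_bot.mpr (IsDiscreteValuationRing.not_a_field _)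
    let p : LTSeries (PrimeSpectrum (PowerSeries k)) :=
      (RelSeries.singleton _ (⟨⊥, Ideal.bot_prime⟩ : PrimeSpectrum (PowerSeries k))).snoc
        _ hlt
    have := Order.LTSeries.length_le_krullDim p
    rw [Order.krullDim] at this
    exact le_trans (by norm_num [p, RelSeries.snoc]; rfl) this


section Spread

open Polynomial PiAux

variable (k : Type*) [Field k]

lemma mem_S {p : Polynomial (PowerSeries k)} :
    p ∈ (piFiltration k).reesAlgebra ↔ ∀ n, p.coeff n ∈ (piFiltration k).I n := Iff.rfl

lemma monomial_mem {b : PowerSeries k} {d : ℕ} (hb : b ∈ (piFiltration k).I d) :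
    (Polynomial.C b * Polynomial.X ^ d) ∈ (piFiltration k).reesAlgebra := by
  rw [mem_S]
  intro n
  rw [Polynomial.coeff_C_mul, Polynomial.coeff_X_pow]
  split_ifs with h
  · rw [mul_one]; exact h ▸ hb
  · rw [mul_zero]; exact Ideal.zero_mem _

/-- Evaluation `f ↦ f(0)(0)` from the Rees algebra to `k`. -/
noncomputable def psi : (piFiltration k).reesAlgebra →+* k :=
  (PowerSeries.constantCoeff (R := k)).comp ((Polynomial.constantCoeff).comp
    (Subalgebra.val _).toRingHom)

lemma psi_surjective : Function.Surjective (psi k) := fun a =>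
  ⟨algebraMap _ _ (PowerSeries.C a), by simp [psi]⟩

/-- The extension of the maximal ideal to the Rees algebra. -/
noncomputable def Jid : Ideal (piFiltration k).reesAlgebra :=
  (IsLocalRing.maximalIdeal (PowerSeries k)).map
    (algebraMap (PowerSeries k) (piFiltration k).reesAlgebra)

lemma J_le_ker : Jid k ≤ RingHom.ker (psi k) := by
  rw [Jid, Ideal.map_le_iff_le_comap]
  intro x hx
  rw [← PowerSeries.ker_coeff_eq_max_ideal, RingHom.mem_ker] at hx
  simp [Ideal.mem_comap, RingHom.mem_ker, psi, hx]

lemma mem_J_of_monomial (d : ℕ) {a : PowerSeries k}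
    (ha : a ∈ IsLocalRing.maximalIdeal (PowerSeries k) * (piFiltration k).I d) :
    ∃ h : (Polynomial.C a * Polynomial.X ^ d) ∈ (piFiltration k).reesAlgebra,
      (⟨_, h⟩ : (piFiltration k).reesAlgebra) ∈ Jid k := by
  refine Submodule.mul_induction_on ha ?_ ?_
  · intro μ hμ b hb
    have h := monomial_mem k ((piFiltration k).I d |>.mul_mem_left μ hb)
    refine ⟨h, ?_⟩
    have key : (⟨_, h⟩ : (piFiltration k).reesAlgebra) =
        algebraMap _ _ μ * ⟨_, monomial_mem k hb⟩ := by
      apply Subtype.ext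
      show Polynomial.C (μ * b) * Polynomial.X ^ d
          = Polynomial.C μ * (Polynomial.C b * Polynomial.X ^ d)
      rw [map_mul, mul_assoc]
    rw [key]
    exact Ideal.mul_mem_right _ _ (Ideal.mem_map_of_mem _ hμ)
  · rintro x y ⟨hx, jx⟩ ⟨hy, jy⟩
    have h : (Polynomial.C (x + y) * Polynomial.X ^ d) ∈ (piFiltration k).reesAlgebra := by
      rw [map_add, add_mul]; exact add_mem hx hy
    refine ⟨h, ?_⟩
    have key : (⟨_, h⟩ : (piFiltration k).reesAlgebra) = ⟨_, hx⟩ + ⟨_, hy⟩ := by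
      apply Subtype.ext
      show Polynomial.C (x + y) * Polynomial.X ^ d
          = Polynomial.C x * Polynomial.X ^ d + Polynomial.C y * Polynomial.X ^ d
      rw [map_add, add_mul]
    rw [key]
    exact Ideal.add_mem _ jx jy

lemma prime_eq_ker (P : Ideal (piFiltration k).reesAlgebra) (hP : P.IsPrime)
    (hJP : Jid k ≤ P) : P = RingHom.ker (psi k) := by
  have hker : (RingHom.ker (psi k)).IsMaximal :=
    RingHom.ker_isMaximal_of_surjective _ (psi_surjective k)
  have hsub : RingHom.ker (psi k) ≤ P := by
    rintro ⟨p, hp⟩ hf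
    have hp0 : p.coeff 0 ∈ IsLocalRing.maximalIdeal (PowerSeries k) := by
      rw [← PowerSeries.ker_coeff_eq_max_ideal, RingHom.mem_ker]
      simpa [psi] using hf
    have hdecomp : (⟨p, hp⟩ : (piFiltration k).reesAlgebra) =
        ∑ i ∈ Finset.range (p.natDegree + 1),
          (⟨Polynomial.C (p.coeff i) * Polynomial.X ^ i, monomial_mem k (hp i)⟩) := by
      apply Subtype.ext
      rw [AddSubmonoidClass.coe_finset_sum]
      exact p.as_sum_range_C_mul_X_pow
    rw [hdecomp]
    refine Ideal.sum_mem _ fun i _ => ?_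
    rcases Nat.eq_zero_or_pos i with rfl | hi
    · have key : (⟨Polynomial.C (p.coeff 0) * Polynomial.X ^ 0,
            monomial_mem k (hp 0)⟩ : (piFiltration k).reesAlgebra)
          = algebraMap _ _ (p.coeff 0) := by
        apply Subtype.ext
        show Polynomial.C (p.coeff 0) * Polynomial.X ^ 0 = Polynomial.C (p.coeff 0)
        rw [pow_zero, mul_one]
      rw [key]
      exact hJP (Ideal.mem_map_of_mem _ hp0)
    · obtain ⟨r, hr0, hr⟩ := piKey k hi (hp i)
      obtain ⟨hmem, hJ⟩ := mem_J_of_monomial k (r * i) hr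
      have hpow : (⟨Polynomial.C (p.coeff i) * Polynomial.X ^ i,
            monomial_mem k (hp i)⟩ : (piFiltration k).reesAlgebra) ^ r = ⟨_, hmem⟩ := by
        apply Subtype.ext
        show (Polynomial.C (p.coeff i) * Polynomial.X ^ i) ^ r
            = Polynomial.C (p.coeff i ^ r) * Polynomial.X ^ (r * i)
        rw [mul_pow, ← map_pow, ← pow_mul, mul_comm i r]
      exact hP.mem_of_pow_mem r (by rw [hpow]; exact hJP hJ)
  exact ((hker.eq_of_le hP.ne_top hsub)).symm

lemma spread_zero : (piFiltration k).analyticSpread = 0 := by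
  have hq : RingHom.ker (Ideal.Quotient.mk (Jid k)) ≤ RingHom.ker (psi k) := by
    rw [Ideal.mk_ker]; exact J_le_ker k
  haveI : (RingHom.ker (psi k)).IsPrime :=
    (RingHom.ker_isMaximal_of_surjective _ (psi_surjective k)).isPrime
  have hkerprime : ((RingHom.ker (psi k)).map (Ideal.Quotient.mk (Jid k))).IsPrime :=
    Ideal.map_isPrime_of_surjective Ideal.Quotient.mk_surjective hq
  haveI : Unique (PrimeSpectrum ((piFiltration k).reesAlgebra ⧸ Jid k)) := by
    refine ⟨⟨⟨_, hkerprime⟩⟩, fun q => PrimeSpectrum.ext ?_⟩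
    have hc : Ideal.comap (Ideal.Quotient.mk (Jid k)) q.asIdeal = RingHom.ker (psi k) := by
      refine prime_eq_ker k _ (q.isPrime.comap _) ?_
      intro x hx
      rw [Ideal.mem_comap]
      rw [Ideal.Quotient.eq_zero_iff_mem.mpr hx]
      exact Ideal.zero_mem _
    show q.asIdeal = (RingHom.ker (psi k)).map (Ideal.Quotient.mk (Jid k))
    rw [← hc, Ideal.map_comap_of_surjective _ Ideal.Quotient.mk_surjective]
  show ringKrullDim ((piFiltration k).reesAlgebra ⧸ Jid k) = 0
  rw [ringKrullDim]
  exact Order.krullDim_eq_zero_of_unique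

end Spread


/-- Let `k` be a field, `R = k[[x]]` with maximal ideal `m_R = (x)`, and for
`n ∈ ℕ` let `I_n = (x^{⌈nπ⌉})`.  Then `𝓘 = {I_n}` is a filtration on `R` whose analytic spread
is `ℓ(𝓘) = 0 < 1 = dim R`; in particular for every `n > 0` and every `f ∈ I_n` there is
`r ∈ ℤ_{>0}` with `f ^ r ∈ m_R I_{rn}`. -/
theorem powerSeries_ceil_pi_filtration (k : Type*) [Field k] :
    Ideal.span {(PowerSeries.X : PowerSeries k)}
        = IsLocalRing.maximalIdeal (PowerSeries k) ∧
      ∃ F : IdealFiltration (PowerSeries k),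
        (∀ n : ℕ, F.I n
          = Ideal.span {(PowerSeries.X : PowerSeries k) ^ ⌈(n : ℝ) * Real.pi⌉₊}) ∧
        F.analyticSpread = 0 ∧
        (0 : WithBot (WithTop ℕ)) < 1 ∧
        ringKrullDim (PowerSeries k) = 1 ∧
        ∀ n > 0, ∀ f ∈ F.I n, ∃ r > 0,
          f ^ r ∈ IsLocalRing.maximalIdeal (PowerSeries k) * F.I (r * n) := by
  refine ⟨PowerSeries.maximalIdeal_eq_span_X.symm, piFiltration k, fun n => rfl,
    ?_, by norm_num, ?_, fun n hn f hf => piKey k hn hf⟩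
  · exact spread_zero k
  · exact psDimOne k
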